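/- arXiv:2603.14340 — 2 statements merged into one kernel-verified Lean document; each statement's English description precedes it below -/
import Mathlib

section
/- Let n > 2k ≥ 2 be integers. Let h and v be smooth functions on the half-space {(t,x) : t > 0} ⊂ ℝ × ℝ^{n+1} satisfying Xh = (−(n−2k)/3 − 2)·h and Xv = (−(n−2k)/3)·v pointwise. Then the function Σ_{a+b+c=k} A_{a,b,c}·Δ̃^a((Δ̃^b(Q·h))·(Δ̃^c v)) vanishes at every point of {t > 0} at which |x| = t (that is, on the null cone {Q = 0} ∩ {t > 0}). -/
/-- The flat Fefferman–Graham ambient space `ℝ × ℝ^{n+1}` of the standard conformal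
`n`-sphere, with coordinates `(t, x⁰, …, xⁿ)`. -/
abbrev Amb (n : ℕ) : Type := ℝ × (Fin (n+1) → ℝ)

/-- The partial derivative `∂_t`. -/
noncomputable def ptD {n : ℕ} (f : Amb n → ℝ) (p : Amb n) : ℝ :=
  fderiv ℝ f p (1, 0)

/-- The partial derivative `∂_{xⁱ}`. -/
noncomputable def pxD {n : ℕ} (i : Fin (n+1)) (f : Amb n → ℝ) (p : Amb n) : ℝ :=
  fderiv ℝ f p (0, Pi.single i 1)

/-- The flat ambient Laplacian `Δ̃f = ∂_t²f − Σᵢ ∂_{xⁱ}²f` (convention `Δ ≥ 0` for the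
metric `g̃ = −dt² + Σᵢ (dxⁱ)²`). -/
noncomputable def LapA {n : ℕ} (f : Amb n → ℝ) : Amb n → ℝ :=
  fun p => ptD (fun q => ptD f q) p - ∑ i, pxD i (fun q => pxD i f q) p

/-- The Euler (dilation) operator `Xf = t∂_t f + Σᵢ xⁱ∂_{xⁱ} f`. -/
noncomputable def EulerA {n : ℕ} (f : Amb n → ℝ) (p : Amb n) : ℝ :=
  p.1 * ptD f p + ∑ i, p.2 i * pxD i f p

/-- The function `Q(t,x) = |x|² − t²`. -/
def QA {n : ℕ} (p : Amb n) : ℝ := (∑ i, (p.2 i)^2) - p.1^2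

/-- The half-space `{(t,x) : t > 0}`. -/
def HS (n : ℕ) : Set (Amb n) := {p | 0 < p.1}

/-- The Ovsienko–Redou coefficient
`A_{a,b,c} = (k!/(a!b!c!))·Γ(α+a+b)·Γ(α+a+c)·Γ(α+b+c)/(Γ(α)·Γ(α+k)²)`, `α = (n−2k)/6`. -/
noncomputable def ORA (n k a b c : ℕ) : ℝ :=
  ((k.factorial : ℝ) / ((a.factorial : ℝ) * (b.factorial : ℝ) * (c.factorial : ℝ)))
  * Real.Gamma (((n:ℝ) - 2*k)/6 + a + b)
  * Real.Gamma (((n:ℝ) - 2*k)/6 + a + c)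
  * Real.Gamma (((n:ℝ) - 2*k)/6 + b + c)
  / (Real.Gamma (((n:ℝ) - 2*k)/6) * Real.Gamma (((n:ℝ) - 2*k)/6 + k)^2)

/-- The Ovsienko–Redou ambient operator `D̃_{2k}(u ⊗ v) = Σ_{a+b+c=k} A_{a,b,c}·Δ̃^a((Δ̃^b u)(Δ̃^c v))`. -/
noncomputable def ORop {n : ℕ} (k : ℕ) (u v : Amb n → ℝ) : Amb n → ℝ :=
  fun p => ∑ abc ∈ Finset.HasAntidiagonal.antidiagonal k, ∑ bc ∈ Finset.HasAntidiagonal.antidiagonal abc.2,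
    ORA n k abc.1 bc.1 bc.2
      * LapA^[abc.1] (fun q => LapA^[bc.1] u q * LapA^[bc.2] v q) p

namespace ORtool
variable {n : ℕ}

noncomputable def Dv (w : Amb n) (f : Amb n → ℝ) (q : Amb n) : ℝ := fderiv ℝ f q w
def et : Amb n := (1, 0)
def ex (i : Fin (n+1)) : Amb n := (0, Pi.single i 1)

lemma ptD_eq (f : Amb n → ℝ) : ptD f = Dv et f := rfl
lemma pxD_eq (i) (f : Amb n → ℝ) : pxD i f = Dv (ex i) f := rfl
lemma lap_eq (f : Amb n → ℝ) :
    LapA f = fun p => Dv et (Dv et f) p - ∑ i, Dv (ex i) (Dv (ex i) f) p := rfl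

lemma HS_open : IsOpen (HS n) := isOpen_lt continuous_const continuous_fst

def Sm (f : Amb n → ℝ) : Prop := ContDiffOn ℝ (⊤ : ℕ∞) f (HS n)

lemma Sm.cAt {f : Amb n → ℝ} (hf : Sm f) {q : Amb n} (hq : q ∈ HS n) :
    ContDiffAt ℝ (⊤ : ℕ∞) f q := hf.contDiffAt (HS_open.mem_nhds hq)

lemma Sm.dAt {f : Amb n → ℝ} (hf : Sm f) {q : Amb n} (hq : q ∈ HS n) :
    DifferentiableAt ℝ f q := (hf.cAt hq).differentiableAt (by simp)

lemma Sm.fderivSm {f : Amb n → ℝ} (hf : Sm f) :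
    ContDiffOn ℝ (⊤ : ℕ∞) (fderiv ℝ f) (HS n) :=
  hf.fderiv_of_isOpen HS_open (by exact_mod_cast le_top)

lemma Sm.fdAt {f : Amb n → ℝ} (hf : Sm f) {q : Amb n} (hq : q ∈ HS n) :
    DifferentiableAt ℝ (fderiv ℝ f) q :=
  ((hf.fderivSm.contDiffAt (HS_open.mem_nhds hq))).differentiableAt (by simp)

lemma Sm.dv {f : Amb n → ℝ} (hf : Sm f) (w : Amb n) : Sm (Dv w f) :=
  hf.fderivSm.continuousLinearMap_comp (ContinuousLinearMap.apply ℝ ℝ w)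

lemma Dv_congr {f g : Amb n → ℝ} (hfg : Set.EqOn f g (HS n)) {q : Amb n}
    (hq : q ∈ HS n) (w : Amb n) : Dv w f q = Dv w g q := by
  unfold Dv
  rw [Filter.EventuallyEq.fderiv_eq (hfg.eventuallyEq_of_mem (HS_open.mem_nhds hq))]

lemma Dv_mul {f g : Amb n → ℝ} {q : Amb n} (hf : DifferentiableAt ℝ f q)
    (hg : DifferentiableAt ℝ g q) (w : Amb n) :
    Dv w (fun x => f x * g x) q = f q * Dv w g q + g q * Dv w f q := by
  unfold Dv; rw [fderiv_fun_mul hf hg]; simp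

lemma Dv_add {f g : Amb n → ℝ} {q : Amb n} (hf : DifferentiableAt ℝ f q)
    (hg : DifferentiableAt ℝ g q) (w : Amb n) :
    Dv w (fun x => f x + g x) q = Dv w f q + Dv w g q := by
  unfold Dv; rw [fderiv_fun_add hf hg]; simp

lemma Dv_const_mul {g : Amb n → ℝ} {q : Amb n} (hg : DifferentiableAt ℝ g q) (c : ℝ)
    (w : Amb n) : Dv w (fun x => c * g x) q = c * Dv w g q := by
  unfold Dv; rw [fderiv_const_mul hg]; simp

lemma fderiv_apply_const {F : Type*} [NormedAddCommGroup F] [NormedSpace ℝ F]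
    {g : Amb n → (Amb n →L[ℝ] F)} {q : Amb n} (hg : DifferentiableAt ℝ g q) (u w : Amb n) :
    fderiv ℝ (fun r => g r w) q u = fderiv ℝ g q u w := by
  have h := ((ContinuousLinearMap.apply ℝ F w).hasFDerivAt.comp q hg.hasFDerivAt).fderiv
  have h2 : fderiv ℝ (fun r => g r w) q
      = (ContinuousLinearMap.apply ℝ F w).comp (fderiv ℝ g q) := h
  rw [h2]; rfl

lemma Dv_Dv {f : Amb n → ℝ} {q : Amb n} (hf : DifferentiableAt ℝ (fderiv ℝ f) q)
    (u w : Amb n) : Dv u (Dv w f) q = fderiv ℝ (fderiv ℝ f) q u w :=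
  fderiv_apply_const hf u w

lemma Dv_comm {f : Amb n → ℝ} (hf : Sm f) {q : Amb n} (hq : q ∈ HS n) (u w : Amb n) :
    Dv u (Dv w f) q = Dv w (Dv u f) q := by
  have hc : ContDiffAt ℝ 2 f q := (hf.cAt hq).of_le (by norm_cast)
  have hs := hc.isSymmSndFDerivAt (by simp)
  rw [Dv_Dv (hf.fdAt hq), Dv_Dv (hf.fdAt hq), hs u w]

lemma euler_eq (f : Amb n → ℝ) (p : Amb n) : EulerA f p = fderiv ℝ f p p := by
  have hterm : ∀ i : Fin (n+1), p.2 i • (ex i : Amb n) = ((0:ℝ), Pi.single i (p.2 i)) := by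
    intro i
    unfold ex
    rw [Prod.smul_mk, smul_zero, ← Pi.single_smul, smul_eq_mul, mul_one]
  have h1 : (∑ i, p.2 i • (ex i : Amb n)) = ((0:ℝ), p.2) := by
    rw [Finset.sum_congr rfl (fun i _ => hterm i)]
    refine Prod.ext ?_ ?_
    · rw [Prod.fst_sum]; simp
    · rw [Prod.snd_sum]; exact Finset.univ_sum_single p.2
  have hv : p = p.1 • (et : Amb n) + ∑ i, p.2 i • ex i := by
    rw [h1]; unfold et
    refine Prod.ext ?_ ?_ <;> simp
  calc EulerA f p = p.1 • fderiv ℝ f p et + ∑ i, p.2 i • fderiv ℝ f p (ex i) := by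
        unfold EulerA ptD pxD et ex; simp [smul_eq_mul]
    _ = fderiv ℝ f p (p.1 • et + ∑ i, p.2 i • ex i) := by
        rw [map_add, map_smul, map_sum]; simp
    _ = fderiv ℝ f p p := by rw [← hv]

lemma Dv_sub {f g : Amb n → ℝ} {q : Amb n} (hf : DifferentiableAt ℝ f q)
    (hg : DifferentiableAt ℝ g q) (w : Amb n) :
    Dv w (fun x => f x - g x) q = Dv w f q - Dv w g q := by
  unfold Dv; rw [fderiv_fun_sub hf hg]; simp

lemma Dv_sum {ι : Type*} {s : Finset ι} {f : ι → Amb n → ℝ} {q : Amb n}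
    (hf : ∀ i ∈ s, DifferentiableAt ℝ (f i) q) (w : Amb n) :
    Dv w (fun x => ∑ i ∈ s, f i x) q = ∑ i ∈ s, Dv w (f i) q := by
  unfold Dv; rw [fderiv_fun_sum hf]; simp

noncomputable def coordCLM (i : Fin (n+1)) : Amb n →L[ℝ] ℝ :=
  (ContinuousLinearMap.proj i).comp (ContinuousLinearMap.snd ℝ ℝ (Fin (n+1) → ℝ))

lemma coord_eq (i : Fin (n+1)) : (fun q : Amb n => q.2 i) = coordCLM i := rfl

lemma Dv_coord (i : Fin (n+1)) (w q : Amb n) :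
    Dv w (fun q : Amb n => q.2 i) q = w.2 i := by
  unfold Dv; rw [coord_eq i, ContinuousLinearMap.fderiv]; rfl

lemma dAt_coord (i : Fin (n+1)) (q : Amb n) :
    DifferentiableAt ℝ (fun q : Amb n => q.2 i) q := by
  rw [coord_eq]; exact (coordCLM i).differentiableAt

lemma Dv_fst (w q : Amb n) : Dv w (fun q : Amb n => q.1) q = w.1 := by
  unfold Dv
  rw [show (fun q : Amb n => q.1) = Prod.fst from rfl, fderiv_fst]; rfl

lemma QA_contDiff : ContDiff ℝ (⊤ : ℕ∞) (QA (n:=n)) := by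
  unfold QA
  apply ContDiff.sub
  · exact ContDiff.sum fun i _ =>
      ((coordCLM i).contDiff (𝕜 := ℝ)).pow 2
  · exact contDiff_fst.pow 2

lemma QA_dAt (q : Amb n) : DifferentiableAt ℝ (QA (n:=n)) q :=
  QA_contDiff.differentiable (by norm_cast) q

lemma Sm_QA : Sm (QA (n:=n)) := QA_contDiff.contDiffOn

lemma Dv_QA (w q : Amb n) : Dv w (QA (n:=n)) q = (∑ i, 2 * q.2 i * w.2 i) - 2 * q.1 * w.1 := by
  unfold QA
  rw [Dv_sub (by fun_prop) (by fun_prop) w]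
  congr 1
  · rw [Dv_sum (fun i _ => by fun_prop) w]
    refine Finset.sum_congr rfl fun i _ => ?_
    have : (fun q : Amb n => (q.2 i)^2) = fun q : Amb n => q.2 i * q.2 i := by
      funext q; ring
    rw [this, Dv_mul (dAt_coord i q) (dAt_coord i q), Dv_coord]; ring
  · have : (fun q : Amb n => (q.1)^2) = fun q : Amb n => q.1 * q.1 := by
      funext q; ring
    rw [this, Dv_mul differentiableAt_fst differentiableAt_fst, Dv_fst]; ring

lemma Dv_QA_et (q : Amb n) : Dv et (QA (n:=n)) q = -(2 * q.1) := by
  rw [Dv_QA]; unfold et; simp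

lemma Dv_QA_ex (i : Fin (n+1)) (q : Amb n) : Dv (ex i) (QA (n:=n)) q = 2 * q.2 i := by
  rw [Dv_QA]; unfold ex
  simp [Pi.single_apply, mul_ite, Finset.sum_ite_eq']

lemma Sm.lap {f : Amb n → ℝ} (hf : Sm f) : Sm (LapA f) := by
  rw [lap_eq]
  exact ContDiffOn.sub ((hf.dv et).dv et)
    (ContDiffOn.sum fun i _ => ((hf.dv (ex i)).dv (ex i)))

lemma Sm.lap_iter {f : Amb n → ℝ} (hf : Sm f) (m : ℕ) : Sm (LapA^[m] f) := by
  induction m with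
  | zero => exact hf
  | succ m ih => rw [Function.iterate_succ_apply']; exact ih.lap

lemma Sm.mul {f g : Amb n → ℝ} (hf : Sm f) (hg : Sm g) : Sm (fun q => f q * g q) :=
  ContDiffOn.mul hf hg

lemma Dv_congr_fun {f g : Amb n → ℝ} (hfg : Set.EqOn f g (HS n)) (w : Amb n) :
    Set.EqOn (Dv w f) (Dv w g) (HS n) := fun _ hq => Dv_congr hfg hq w

lemma lap_congr {f g : Amb n → ℝ} (hfg : Set.EqOn f g (HS n)) :
    Set.EqOn (LapA f) (LapA g) (HS n) := by
  intro q hq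
  rw [lap_eq, lap_eq]
  simp only
  rw [Dv_congr (Dv_congr_fun hfg et) hq et]
  congr 1
  exact Finset.sum_congr rfl fun i _ => Dv_congr (Dv_congr_fun hfg (ex i)) hq (ex i)

lemma lap_iter_congr {f g : Amb n → ℝ} (hfg : Set.EqOn f g (HS n)) (m : ℕ) :
    Set.EqOn (LapA^[m] f) (LapA^[m] g) (HS n) := by
  induction m with
  | zero => exact hfg
  | succ m ih => rw [Function.iterate_succ_apply', Function.iterate_succ_apply']
                 exact lap_congr ih

lemma Sm.add_smul {f g : Amb n → ℝ} (hf : Sm f) (hg : Sm g) (c : ℝ) :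
    Sm (fun x => f x + c * g x) := hf.add (contDiffOn_const.mul hg)

lemma eqOn_dv_add_smul {f g : Amb n → ℝ} (hf : Sm f) (hg : Sm g) (c : ℝ) (w : Amb n) :
    Set.EqOn (Dv w (fun x => f x + c * g x)) (fun x => Dv w f x + c * Dv w g x) (HS n) := by
  intro q hq
  rw [show (fun x => f x + c * g x) = (fun x => f x + (fun y => c * g y) x) from rfl,
    Dv_add (hf.dAt hq) ((hg.dAt hq).const_mul c), Dv_const_mul (hg.dAt hq)]

lemma lap_add_smul {f g : Amb n → ℝ} (hf : Sm f) (hg : Sm g) (c : ℝ) {q : Amb n}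
    (hq : q ∈ HS n) :
    LapA (fun x => f x + c * g x) q = LapA f q + c * LapA g q := by
  have key : ∀ w : Amb n, Dv w (Dv w (fun x => f x + c * g x)) q
      = Dv w (Dv w f) q + c * Dv w (Dv w g) q := by
    intro w
    rw [Dv_congr (eqOn_dv_add_smul hf hg c w) hq w,
      show (fun x => Dv w f x + c * Dv w g x)
        = (fun x => Dv w f x + (fun y => c * Dv w g y) x) from rfl,
      Dv_add ((hf.dv w).dAt hq) (((hg.dv w).dAt hq).const_mul c),
      Dv_const_mul ((hg.dv w).dAt hq)]
  rw [lap_eq, lap_eq, lap_eq]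
  simp only
  rw [key et, Finset.sum_congr rfl fun i _ => key (ex i), Finset.sum_add_distrib,
    ← Finset.mul_sum]
  ring

lemma lap_iter_add_smul {f g : Amb n → ℝ} (hf : Sm f) (hg : Sm g) (c : ℝ) (m : ℕ)
    {q : Amb n} (hq : q ∈ HS n) :
    LapA^[m] (fun x => f x + c * g x) q = LapA^[m] f q + c * LapA^[m] g q := by
  induction m generalizing q with
  | zero => simp
  | succ m ih =>
      rw [Function.iterate_succ_apply', Function.iterate_succ_apply',
        Function.iterate_succ_apply']
      have hEq : Set.EqOn (LapA^[m] (fun x => f x + c * g x))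
          (fun x => LapA^[m] f x + c * LapA^[m] g x) (HS n) := fun r hr => ih hr
      rw [lap_congr hEq hq, lap_add_smul (hf.lap_iter m) (hg.lap_iter m) c hq]

lemma eqOn_dv_Qmul {f : Amb n → ℝ} (hf : Sm f) (w : Amb n) :
    Set.EqOn (Dv w (fun x => QA x * f x))
      (fun x => QA x * Dv w f x + f x * Dv w QA x) (HS n) := by
  intro q hq
  rw [Dv_mul (QA_dAt q) (hf.dAt hq)]

lemma lap_Qmul {f : Amb n → ℝ} (hf : Sm f) {q : Amb n} (hq : q ∈ HS n) :
    LapA (fun x => QA x * f x) q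
      = QA q * LapA f q - 4 * EulerA f q - 2*((n:ℝ)+2) * f q := by
  have hdt : ∀ w : Amb n, DifferentiableAt ℝ (Dv w f) q := fun w => (hf.dv w).dAt hq
  -- t-part
  have hEt : Set.EqOn (Dv et (fun x => QA x * f x))
      (fun x => QA x * Dv et f x + f x * (-(2 * x.1))) (HS n) := by
    intro r hr
    rw [eqOn_dv_Qmul hf et hr]
    simp only
    rw [Dv_QA_et]
  have ht2 : Dv et (Dv et (fun x => QA x * f x)) q
      = QA q * Dv et (Dv et f) q - 4 * q.1 * Dv et f q - 2 * f q := by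
    rw [Dv_congr hEt hq et]
    have d1 : DifferentiableAt ℝ (fun x : Amb n => QA x * Dv et f x) q :=
      (QA_dAt q).mul (hdt et)
    have d2 : DifferentiableAt ℝ (fun x : Amb n => f x * (-(2 * x.1))) q :=
      (hf.dAt hq).mul (by fun_prop)
    rw [Dv_add d1 d2 et, Dv_mul (QA_dAt q) (hdt et) et, Dv_QA_et,
      Dv_mul (hf.dAt hq) (by fun_prop : DifferentiableAt ℝ (fun x : Amb n => -(2 * x.1)) q) et]
    have : Dv et (fun x : Amb n => -(2 * x.1)) q = -2 := by
      rw [show (fun x : Amb n => -(2 * x.1)) = (fun x : Amb n => (-2) * x.1) from by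
          funext x; ring,
        Dv_const_mul differentiableAt_fst, Dv_fst]
      show (-2 : ℝ) * (et : Amb n).1 = -2
      unfold et; norm_num
    rw [this]
    ring
  -- x-parts
  have hx2 : ∀ i, Dv (ex i) (Dv (ex i) (fun x => QA x * f x)) q
      = QA q * Dv (ex i) (Dv (ex i) f) q + 4 * q.2 i * Dv (ex i) f q + 2 * f q := by
    intro i
    have hEx : Set.EqOn (Dv (ex i) (fun x => QA x * f x))
        (fun x => QA x * Dv (ex i) f x + f x * (2 * x.2 i)) (HS n) := by
      intro r hr
      rw [eqOn_dv_Qmul hf (ex i) hr]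
      simp only
      rw [Dv_QA_ex]
    rw [Dv_congr hEx hq (ex i)]
    have d1 : DifferentiableAt ℝ (fun x : Amb n => QA x * Dv (ex i) f x) q :=
      (QA_dAt q).mul (hdt (ex i))
    have d2 : DifferentiableAt ℝ (fun x : Amb n => f x * (2 * x.2 i)) q :=
      (hf.dAt hq).mul (by fun_prop)
    rw [Dv_add d1 d2 (ex i), Dv_mul (QA_dAt q) (hdt (ex i)) (ex i), Dv_QA_ex,
      Dv_mul (hf.dAt hq)
        (by fun_prop : DifferentiableAt ℝ (fun x : Amb n => 2 * x.2 i) q) (ex i)]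
    have : Dv (ex i) (fun x : Amb n => 2 * x.2 i) q = 2 := by
      rw [Dv_const_mul (dAt_coord i q), Dv_coord]
      show (2:ℝ) * (ex i : Amb n).2 i = 2
      unfold ex
      simp
    rw [this]
    ring
  rw [lap_eq, lap_eq]
  simp only
  rw [ht2, Finset.sum_congr rfl fun i _ => hx2 i, Finset.sum_add_distrib,
    Finset.sum_add_distrib, ← Finset.mul_sum, Finset.sum_const, Finset.card_univ,
    Fintype.card_fin, nsmul_eq_mul]
  have he : EulerA f q = q.1 * Dv et f q + ∑ i, q.2 i * Dv (ex i) f q := rfl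
  rw [he]
  have : ∑ i, 4 * q.2 i * Dv (ex i) f q = 4 * ∑ i, q.2 i * Dv (ex i) f q := by
    rw [Finset.mul_sum]; exact Finset.sum_congr rfl fun i _ => by ring
  rw [this]
  push_cast
  ring

lemma Sm.fderiv2Sm {f : Amb n → ℝ} (hf : Sm f) :
    ContDiffOn ℝ (⊤ : ℕ∞) (fderiv ℝ (fderiv ℝ f)) (HS n) :=
  hf.fderivSm.fderiv_of_isOpen HS_open (by exact_mod_cast le_top)

lemma Sm.fd2At {f : Amb n → ℝ} (hf : Sm f) {q : Amb n} (hq : q ∈ HS n) :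
    DifferentiableAt ℝ (fderiv ℝ (fderiv ℝ f)) q :=
  (hf.fderiv2Sm.contDiffAt (HS_open.mem_nhds hq)).differentiableAt (by simp)

lemma D2_symm {f : Amb n → ℝ} (hf : Sm f) {q : Amb n} (hq : q ∈ HS n) (u w : Amb n) :
    fderiv ℝ (fderiv ℝ f) q u w = fderiv ℝ (fderiv ℝ f) q w u :=
  (((hf.cAt hq).of_le (by norm_cast)).isSymmSndFDerivAt (by rw [minSmoothness_of_isRCLikeNormedField]; exact WithTop.coe_le_coe.mpr (le_top : (2:ℕ∞) ≤ ⊤))) u w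

lemma D3_symm12 {f : Amb n → ℝ} (hf : Sm f) {q : Amb n} (hq : q ∈ HS n) (u v a : Amb n) :
    fderiv ℝ (fderiv ℝ (fderiv ℝ f)) q u v a
      = fderiv ℝ (fderiv ℝ (fderiv ℝ f)) q v u a := by
  have hc : ContDiffAt ℝ 2 (fderiv ℝ f) q :=
    (hf.fderivSm.contDiffAt (HS_open.mem_nhds hq)).of_le (by norm_cast)
  rw [hc.isSymmSndFDerivAt (by simp) u v]

lemma dAt_fderiv_app {f : Amb n → ℝ} (hf : Sm f) {q : Amb n} (hq : q ∈ HS n) (u : Amb n) :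
    DifferentiableAt ℝ (fun r => fderiv ℝ f r u) q := by
  simpa [Function.comp_def] using
    ((ContinuousLinearMap.apply ℝ ℝ u).hasFDerivAt.comp q
      (hf.fdAt hq).hasFDerivAt).differentiableAt

lemma dAt_D2app {f : Amb n → ℝ} (hf : Sm f) {q : Amb n} (hq : q ∈ HS n) (u : Amb n) :
    DifferentiableAt ℝ (fun r => fderiv ℝ (fderiv ℝ f) r u) q := by
  exact (hf.fd2At hq).clm_apply (differentiableAt_const u)

lemma dAt_D2app2 {f : Amb n → ℝ} (hf : Sm f) {q : Amb n} (hq : q ∈ HS n) (u a : Amb n) :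
    DifferentiableAt ℝ (fun r => fderiv ℝ (fderiv ℝ f) r u a) q := by
  simpa [Function.comp_def] using
    ((ContinuousLinearMap.apply ℝ ℝ a).hasFDerivAt.comp q
      (dAt_D2app hf hq u).hasFDerivAt).differentiableAt

lemma fderiv_D2app {f : Amb n → ℝ} (hf : Sm f) {q : Amb n} (hq : q ∈ HS n) (u v : Amb n) :
    fderiv ℝ (fun r => fderiv ℝ (fderiv ℝ f) r u) q v
      = fderiv ℝ (fderiv ℝ (fderiv ℝ f)) q v u :=
  fderiv_apply_const (hf.fd2At hq) v u

lemma fderiv_D3app {f : Amb n → ℝ} (hf : Sm f) {q : Amb n} (hq : q ∈ HS n) (u a v : Amb n) :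
    fderiv ℝ (fun r => fderiv ℝ (fderiv ℝ f) r u a) q v
      = fderiv ℝ (fderiv ℝ (fderiv ℝ f)) q v u a := by
  rw [fderiv_apply_const (dAt_D2app hf hq u) v a, fderiv_D2app hf hq u v]

lemma D3_symm23 {f : Amb n → ℝ} (hf : Sm f) {p : Amb n} (hp : p ∈ HS n) (v a b : Amb n) :
    fderiv ℝ (fderiv ℝ (fderiv ℝ f)) p v a b
      = fderiv ℝ (fderiv ℝ (fderiv ℝ f)) p v b a := by
  have hEq : Set.EqOn (fun r => fderiv ℝ (fderiv ℝ f) r a b)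
      (fun r => fderiv ℝ (fderiv ℝ f) r b a) (HS n) := fun r hr => D2_symm hf hr a b
  have h1 : fderiv ℝ (fun r => fderiv ℝ (fderiv ℝ f) r a b) p
      = fderiv ℝ (fun r => fderiv ℝ (fderiv ℝ f) r b a) p :=
    (hEq.eventuallyEq_of_mem (HS_open.mem_nhds hp)).fderiv_eq
  calc fderiv ℝ (fderiv ℝ (fderiv ℝ f)) p v a b
      = fderiv ℝ (fun r => fderiv ℝ (fderiv ℝ f) r a b) p v := (fderiv_D3app hf hp a b v).symm
    _ = fderiv ℝ (fun r => fderiv ℝ (fderiv ℝ f) r b a) p v := by rw [h1]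
    _ = fderiv ℝ (fderiv ℝ (fderiv ℝ f)) p v b a := fderiv_D3app hf hp b a v

lemma hom_star {f : Amb n → ℝ} {w : ℝ} (hf : Sm f)
    (hw : ∀ r ∈ HS n, EulerA f r = w * f r) :
    ∀ q ∈ HS n, ∀ u : Amb n, fderiv ℝ (fderiv ℝ f) q u q = (w - 1) * fderiv ℝ f q u := by
  intro q hq u
  have hEq : Set.EqOn (fun r => fderiv ℝ f r r) (fun r => w * f r) (HS n) := fun r hr => by
    show fderiv ℝ f r r = w * f r
    rw [← euler_eq]; exact hw r hr
  have h1 : fderiv ℝ (fun r => fderiv ℝ f r r) q = fderiv ℝ (fun r => w * f r) q :=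
    (hEq.eventuallyEq_of_mem (HS_open.mem_nhds hq)).fderiv_eq
  have h2 : fderiv ℝ (fun r => fderiv ℝ f r r) q
      = (fderiv ℝ f q).comp (fderiv ℝ (fun y : Amb n => y) q)
        + (fderiv ℝ (fderiv ℝ f) q).flip q :=
    fderiv_clm_apply (hf.fdAt hq) differentiableAt_fun_id
  have h3 : fderiv ℝ (fun r => w * f r) q = w • fderiv ℝ f q :=
    fderiv_const_mul (hf.dAt hq) w
  have h4 : ((fderiv ℝ f q).comp (fderiv ℝ (fun y : Amb n => y) q)
        + (fderiv ℝ (fderiv ℝ f) q).flip q) u = (w • fderiv ℝ f q) u := by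
    rw [← h2, h1, h3]
  simp only [ContinuousLinearMap.add_apply, ContinuousLinearMap.comp_apply,
    fderiv_id', ContinuousLinearMap.coe_id', id_eq, ContinuousLinearMap.flip_apply,
    ContinuousLinearMap.smul_apply, smul_eq_mul] at h4
  linarith [h4]

lemma hom_star2 {f : Amb n → ℝ} {w : ℝ} (hf : Sm f)
    (hw : ∀ r ∈ HS n, EulerA f r = w * f r) :
    ∀ p ∈ HS n, ∀ u v : Amb n,
      fderiv ℝ (fderiv ℝ (fderiv ℝ f)) p v u p
        = (w - 2) * fderiv ℝ (fderiv ℝ f) p v u := by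
  intro p hp u v
  have hEq : Set.EqOn (fun r => fderiv ℝ (fderiv ℝ f) r u r)
      (fun r => (w-1) * fderiv ℝ f r u) (HS n) := fun r hr => hom_star hf hw r hr u
  have h1 : fderiv ℝ (fun r => fderiv ℝ (fderiv ℝ f) r u r) p
      = fderiv ℝ (fun r => (w-1) * fderiv ℝ f r u) p :=
    (hEq.eventuallyEq_of_mem (HS_open.mem_nhds hp)).fderiv_eq
  have h2 : fderiv ℝ (fun r => fderiv ℝ (fderiv ℝ f) r u r) p
      = ((fun s => fderiv ℝ (fderiv ℝ f) s u) p).comp (fderiv ℝ (fun y : Amb n => y) p)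
        + (fderiv ℝ (fun s => fderiv ℝ (fderiv ℝ f) s u) p).flip p :=
    fderiv_clm_apply (dAt_D2app hf hp u) differentiableAt_fun_id
  have h3 : fderiv ℝ (fun r => (w-1) * fderiv ℝ f r u) p
      = (w-1) • fderiv ℝ (fun r => fderiv ℝ f r u) p :=
    fderiv_const_mul (dAt_fderiv_app hf hp u) (w-1)
  have h4 : (((fun s => fderiv ℝ (fderiv ℝ f) s u) p).comp (fderiv ℝ (fun y : Amb n => y) p)
        + (fderiv ℝ (fun s => fderiv ℝ (fderiv ℝ f) s u) p).flip p) v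
      = ((w-1) • fderiv ℝ (fun r => fderiv ℝ f r u) p) v := by
    rw [← h2, h1, h3]
  simp only [ContinuousLinearMap.add_apply, ContinuousLinearMap.comp_apply,
    fderiv_id', ContinuousLinearMap.coe_id', id_eq, ContinuousLinearMap.flip_apply,
    ContinuousLinearMap.smul_apply, smul_eq_mul] at h4
  rw [fderiv_D2app hf hp u v] at h4
  rw [fderiv_apply_const (hf.fdAt hp) v u] at h4
  have hsym : fderiv ℝ (fderiv ℝ f) p u v = fderiv ℝ (fderiv ℝ f) p v u := D2_symm hf hp u v
  rw [hsym] at h4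
  linarith [h4]

lemma hom_lap {f : Amb n → ℝ} {w : ℝ} (hf : Sm f)
    (hw : ∀ r ∈ HS n, EulerA f r = w * f r) :
    ∀ p ∈ HS n, EulerA (LapA f) p = (w - 2) * LapA f p := by
  intro p hp
  have hLG : Set.EqOn (LapA f)
      (fun r => fderiv ℝ (fderiv ℝ f) r et et
        - ∑ i, fderiv ℝ (fderiv ℝ f) r (ex i) (ex i)) (HS n) := by
    intro r hr
    rw [lap_eq]
    simp only
    rw [Dv_Dv (hf.fdAt hr)]
    congr 1
    exact Finset.sum_congr rfl fun i _ => Dv_Dv (hf.fdAt hr) _ _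
  have step : ∀ u : Amb n, fderiv ℝ (fun r => fderiv ℝ (fderiv ℝ f) r u u) p p
      = (w - 2) * fderiv ℝ (fderiv ℝ f) p u u := by
    intro u
    rw [fderiv_D3app hf hp u u p, D3_symm12 hf hp p u u, D3_symm23 hf hp u p u,
      hom_star2 hf hw p hp u u]
  rw [euler_eq]
  have h1 : fderiv ℝ (LapA f) p p
      = Dv p (fun r => fderiv ℝ (fderiv ℝ f) r et et
          - ∑ i, fderiv ℝ (fderiv ℝ f) r (ex i) (ex i)) p := Dv_congr hLG hp p
  rw [h1, Dv_sub (dAt_D2app2 hf hp et et)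
      (DifferentiableAt.fun_sum fun i _ => dAt_D2app2 hf hp (ex i) (ex i)) p,
    Dv_sum (fun i _ => dAt_D2app2 hf hp (ex i) (ex i)) p]
  have ht : Dv p (fun r => fderiv ℝ (fderiv ℝ f) r et et) p
      = (w - 2) * fderiv ℝ (fderiv ℝ f) p et et := step et
  have hx : ∀ i, Dv p (fun r => fderiv ℝ (fderiv ℝ f) r (ex i) (ex i)) p
      = (w - 2) * fderiv ℝ (fderiv ℝ f) p (ex i) (ex i) := fun i => step (ex i)
  rw [ht, Finset.sum_congr rfl fun i _ => hx i, ← Finset.mul_sum]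
  rw [hLG hp]
  ring

lemma hom_lap_iter {f : Amb n → ℝ} {w : ℝ} (hf : Sm f)
    (hw : ∀ r ∈ HS n, EulerA f r = w * f r) (m : ℕ) :
    ∀ r ∈ HS n, EulerA (LapA^[m] f) r = (w - 2*m) * LapA^[m] f r := by
  induction m with
  | zero => intro r hr; simpa using hw r hr
  | succ m ih =>
      intro r hr
      rw [Function.iterate_succ_apply']
      rw [hom_lap (hf.lap_iter m) ih r hr]
      congr 1
      push_cast
      ring

lemma hom_mul {f g : Amb n → ℝ} {wf wg : ℝ} (hf : Sm f) (hg : Sm g)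
    (hwf : ∀ r ∈ HS n, EulerA f r = wf * f r)
    (hwg : ∀ r ∈ HS n, EulerA g r = wg * g r) :
    ∀ r ∈ HS n, EulerA (fun x => f x * g x) r = (wf + wg) * (f r * g r) := by
  intro r hr
  rw [euler_eq, fderiv_fun_mul (hf.dAt hr) (hg.dAt hr)]
  have : (f r • fderiv ℝ g r + g r • fderiv ℝ f r) r
      = f r * fderiv ℝ g r r + g r * fderiv ℝ f r r := by
    simp [smul_eq_mul]
  rw [this, ← euler_eq, ← euler_eq, hwf r hr, hwg r hr]
  ring

noncomputable def Cc (n m : ℕ) (w : ℝ) : ℝ :=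
  -(m:ℝ)*(4*w + 2*((n:ℝ)+2)) + 4*(m:ℝ)*((m:ℝ)-1)

lemma lapQ_iter {f : Amb n → ℝ} {w : ℝ} (hf : Sm f)
    (hw : ∀ r ∈ HS n, EulerA f r = w * f r) (m : ℕ) :
    ∀ q ∈ HS n, LapA^[m] (fun x => QA x * f x) q
      = QA q * LapA^[m] f q + Cc n m w * LapA^[m-1] f q := by
  induction m with
  | zero => intro q hq; simp [Cc]
  | succ m ih =>
      intro q hq
      rw [Function.iterate_succ_apply']
      have hEq : Set.EqOn (LapA^[m] (fun x => QA x * f x))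
          (fun x => QA x * LapA^[m] f x + Cc n m w * LapA^[m-1] f x) (HS n) :=
        fun r hr => ih r hr
      rw [lap_congr hEq hq,
        lap_add_smul (Sm_QA.mul (hf.lap_iter m)) (hf.lap_iter (m-1)) (Cc n m w) hq,
        lap_Qmul (hf.lap_iter m) hq, hom_lap_iter hf hw m q hq]
      have hG : Cc n m w * LapA (LapA^[m-1] f) q = Cc n m w * LapA^[m] f q := by
        cases m with
        | zero => simp [Cc]
        | succ m' =>
            rw [show m' + 1 - 1 = m' from rfl, ← Function.iterate_succ_apply' LapA m' f]
      rw [hG, ← Function.iterate_succ_apply' LapA m f]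
      have hC : Cc n (m+1) w = Cc n m w - (4*(w - 2*m) + 2*((n:ℝ)+2)) := by
        unfold Cc
        push_cast
        ring
      rw [show m + 1 - 1 = m from rfl, hC]
      ring

noncomputable def gR (n k : ℕ) (a : ℕ) : ℝ := 4*(a:ℝ)*((((n:ℝ)-2*k))/6 + k - a)
noncomputable def bR (n k : ℕ) (b : ℕ) : ℝ := -(4*(b:ℝ)*((((n:ℝ)-2*k))/6 + k - b))

lemma key_id {k : ℕ} (hnk : 2*k < n) (a b c : ℕ) (habc : a + b + c + 1 = k) :
    ORA n k (a+1) b c * gR n k (a+1) + ORA n k a (b+1) c * bR n k (b+1) = 0 := by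
  have hα0 : 0 < ((n:ℝ) - 2*k)/6 := by
    have : (2*k : ℝ) < n := by exact_mod_cast hnk
    linarith
  have hc : (c:ℝ) = (k:ℝ) - 1 - a - b := by
    have : (a:ℝ) + b + c + 1 = k := by exact_mod_cast habc
    linarith
  have hfa : ((a.factorial : ℝ)) ≠ 0 := by exact_mod_cast a.factorial_ne_zero
  have hfb : ((b.factorial : ℝ)) ≠ 0 := by exact_mod_cast b.factorial_ne_zero
  have hfc : ((c.factorial : ℝ)) ≠ 0 := by exact_mod_cast c.factorial_ne_zero
  have ha1 : ((a:ℝ)+1) ≠ 0 := by positivity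
  have hb1 : ((b:ℝ)+1) ≠ 0 := by positivity
  unfold ORA gR bR
  rw [Nat.factorial_succ a, Nat.factorial_succ b]
  push_cast
  set α : ℝ := ((n:ℝ) - 2*↑k)/6 with hαdef
  have hy : α + ↑a + ↑c ≠ 0 := by positivity
  have hz : α + ↑b + ↑c ≠ 0 := by positivity
  have hGy : Real.Gamma (α + ↑a + ↑c + 1) = (α + ↑a + ↑c) * Real.Gamma (α + ↑a + ↑c) :=
    Real.Gamma_add_one hy
  have hGz : Real.Gamma (α + ↑b + ↑c + 1) = (α + ↑b + ↑c) * Real.Gamma (α + ↑b + ↑c) :=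
    Real.Gamma_add_one hz
  have hΓα : Real.Gamma α ≠ 0 := ne_of_gt (Real.Gamma_pos_of_pos hα0)
  have hΓαk : Real.Gamma (α + ↑k) ≠ 0 := ne_of_gt (Real.Gamma_pos_of_pos (by positivity))
  rw [show α + (↑a + 1) + ↑b = α + ↑a + ↑b + 1 from by ring,
      show α + ↑a + (↑b + 1) = α + ↑a + ↑b + 1 from by ring,
      show α + (↑a + 1) + ↑c = α + ↑a + ↑c + 1 from by ring,
      show α + (↑b + 1) + ↑c = α + ↑b + ↑c + 1 from by ring,
      hGy, hGz]
  set G1 : ℝ := Real.Gamma (α + ↑a + ↑b + 1) with hG1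
  set G2 : ℝ := Real.Gamma (α + ↑a + ↑c) with hG2
  set G3 : ℝ := Real.Gamma (α + ↑b + ↑c) with hG3
  set D1 : ℝ := Real.Gamma α with hD1
  set D2 : ℝ := Real.Gamma (α + ↑k) with hD2
  rw [hc]
  field_simp
  ring

end ORtool

open ORtool in
/-- Example 3.4, tangentiality of the Ovsienko–Redou operator: for
`n > 2k ≥ 2` and `h, v` smooth on `{t > 0}` with `Xh = (−(n−2k)/3 − 2)·h` and
`Xv = (−(n−2k)/3)·v` there, the function `Σ_{a+b+c=k} A_{a,b,c}·Δ̃^a((Δ̃^b(Q·h))(Δ̃^c v))`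
vanishes on the null cone `{Q = 0} ∩ {t > 0}`. -/
theorem stmt_11 (n k : ℕ) (hk : 1 ≤ k) (hnk : 2*k < n)
    (h v : Amb n → ℝ)
    (hh : ContDiffOn ℝ (⊤ : ℕ∞) h (HS n)) (hv : ContDiffOn ℝ (⊤ : ℕ∞) v (HS n))
    (hhhom : ∀ p ∈ HS n, EulerA h p = (-((n:ℝ) - 2*k)/3 - 2) * h p)
    (hvhom : ∀ p ∈ HS n, EulerA v p = (-((n:ℝ) - 2*k)/3) * v p)
    (p : Amb n) (hp : p ∈ HS n) (hpQ : QA p = 0) :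
    ORop k (fun q => QA q * h q) v p = 0 := by
  classical
  set wh : ℝ := -((n:ℝ) - 2*k)/3 - 2 with hwhdef
  set wv : ℝ := -((n:ℝ) - 2*k)/3 with hwvdef
  have hSmH : Sm h := hh
  have hSmV : Sm v := hv
  -- pointwise term evaluation
  have term_eval : ∀ a b c : ℕ,
      LapA^[a] (fun q => LapA^[b] (fun x => QA x * h x) q * LapA^[c] v q) p
      = Cc n a (wh - 2*(b:ℝ) + (wv - 2*(c:ℝ)))
          * LapA^[a-1] (fun q => LapA^[b] h q * LapA^[c] v q) p
        + Cc n b wh * LapA^[a] (fun q => LapA^[b-1] h q * LapA^[c] v q) p := by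
    intro a b c
    have hF : Sm (fun q => LapA^[b] h q * LapA^[c] v q) :=
      (hSmH.lap_iter b).mul (hSmV.lap_iter c)
    have hG : Sm (fun q => LapA^[b-1] h q * LapA^[c] v q) :=
      (hSmH.lap_iter (b-1)).mul (hSmV.lap_iter c)
    have homF : ∀ r ∈ HS n, EulerA (fun q => LapA^[b] h q * LapA^[c] v q) r
        = (wh - 2*(b:ℝ) + (wv - 2*(c:ℝ))) * (LapA^[b] h r * LapA^[c] v r) := by
      intro r hr
      rw [hom_mul (hSmH.lap_iter b) (hSmV.lap_iter c)
        (hom_lap_iter hSmH hhhom b) (hom_lap_iter hSmV hvhom c) r hr]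
    have hEqInner : Set.EqOn
        (fun q => LapA^[b] (fun x => QA x * h x) q * LapA^[c] v q)
        (fun q => QA q * (LapA^[b] h q * LapA^[c] v q)
          + Cc n b wh * (LapA^[b-1] h q * LapA^[c] v q)) (HS n) := by
      intro r hr
      simp only
      rw [lapQ_iter hSmH hhhom b r hr]
      ring
    rw [lap_iter_congr hEqInner a hp,
      lap_iter_add_smul (f := fun x => QA x * (LapA^[b] h x * LapA^[c] v x))
        (g := fun x => LapA^[b-1] h x * LapA^[c] v x)
        (Sm_QA.mul hF) hG (Cc n b wh) a hp,
      lapQ_iter hF homF a p hp, hpQ]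
    ring
  -- coefficient conversions
  have coefG : ∀ a b : ℕ, a ≤ k → b ≤ k - a →
      Cc n a (wh - 2*(b:ℝ) + (wv - 2*((k - a - b : ℕ) : ℝ))) = gR n k a := by
    intro a b ha hb
    have hcast : ((k - a - b : ℕ) : ℝ) = (k:ℝ) - a - b := by
      rw [Nat.cast_sub hb, Nat.cast_sub ha]
    rw [hcast, hwhdef, hwvdef]
    unfold Cc gR
    ring
  have coefB : ∀ b : ℕ, Cc n b wh = bR n k b := by
    intro b
    rw [hwhdef, hwvdef]
    unfold Cc bR
    ring
  unfold ORop
  simp only [Finset.Nat.sum_antidiagonal_eq_sum_range_succ_mk]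
  set T : ℕ → ℕ → ℕ → ℝ :=
    fun a b c => LapA^[a] (fun q => LapA^[b] h q * LapA^[c] v q) p with hT
  have step1 : ∀ a ∈ Finset.range k.succ,
      (∑ x1 ∈ Finset.range (k - a).succ, ORA n k a x1 (k - a - x1)
        * LapA^[a] (fun q => LapA^[x1] (fun q => QA q * h q) q * LapA^[k - a - x1] v q) p)
      = ∑ b ∈ Finset.range (k - a).succ,
          (ORA n k a b (k - a - b) * gR n k a * T (a-1) b (k - a - b)
           + ORA n k a b (k - a - b) * bR n k b * T a (b-1) (k - a - b)) := by
    intro a ha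
    refine Finset.sum_congr rfl fun b hb => ?_
    have ha' : a ≤ k := Nat.lt_succ_iff.mp (Finset.mem_range.mp ha)
    have hb' : b ≤ k - a := Nat.lt_succ_iff.mp (Finset.mem_range.mp hb)
    rw [term_eval a b (k - a - b), coefG a b ha' hb', coefB b]
    simp only [hT]
    ring
  refine Eq.trans (Finset.sum_congr rfl step1) ?_
  have hsplit : ∑ a ∈ Finset.range k.succ, ∑ b ∈ Finset.range (k - a).succ,
      (ORA n k a b (k - a - b) * gR n k a * T (a-1) b (k - a - b)
       + ORA n k a b (k - a - b) * bR n k b * T a (b-1) (k - a - b))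
    = (∑ a ∈ Finset.range k.succ, ∑ b ∈ Finset.range (k - a).succ,
        ORA n k a b (k - a - b) * gR n k a * T (a-1) b (k - a - b))
      + (∑ a ∈ Finset.range k.succ, ∑ b ∈ Finset.range (k - a).succ,
        ORA n k a b (k - a - b) * bR n k b * T a (b-1) (k - a - b)) := by
    rw [← Finset.sum_add_distrib]
    exact Finset.sum_congr rfl fun a _ => Finset.sum_add_distrib
  rw [hsplit]
  have hP : (∑ a ∈ Finset.range k.succ, ∑ b ∈ Finset.range (k - a).succ,
      ORA n k a b (k - a - b) * gR n k a * T (a-1) b (k - a - b))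
    = ∑ a ∈ Finset.range k, ∑ b ∈ Finset.range (k - a),
        ORA n k (a+1) b (k - a - b - 1) * gR n k (a+1) * T a b (k - a - b - 1) := by
    rw [Finset.sum_range_succ']
    have h0 : (∑ b ∈ Finset.range (k - 0).succ,
        ORA n k 0 b (k - 0 - b) * gR n k 0 * T (0-1) b (k - 0 - b)) = 0 :=
      Finset.sum_eq_zero fun b _ => by simp [gR]
    rw [h0, add_zero]
    refine Finset.sum_congr rfl fun a ha => ?_
    have ha' : a < k := Finset.mem_range.mp ha
    have hr1 : (k - (a+1)).succ = k - a := by omega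
    rw [hr1]
    refine Finset.sum_congr rfl fun b hb => ?_
    have hc1 : k - (a+1) - b = k - a - b - 1 := by omega
    rw [hc1, show a + 1 - 1 = a from rfl]
  have hQ : (∑ a ∈ Finset.range k.succ, ∑ b ∈ Finset.range (k - a).succ,
      ORA n k a b (k - a - b) * bR n k b * T a (b-1) (k - a - b))
    = ∑ a ∈ Finset.range k, ∑ b ∈ Finset.range (k - a),
        ORA n k a (b+1) (k - a - b - 1) * bR n k (b+1) * T a b (k - a - b - 1) := by
    rw [Finset.sum_range_succ]
    have hlast : (∑ b ∈ Finset.range (k - k).succ,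
        ORA n k k b (k - k - b) * bR n k b * T k (b-1) (k - k - b)) = 0 := by
      rw [Nat.sub_self]
      simp [bR]
    rw [hlast, add_zero]
    refine Finset.sum_congr rfl fun a ha => ?_
    rw [Finset.sum_range_succ']
    have h0 : ORA n k a 0 (k - a - 0) * bR n k 0 * T a (0-1) (k - a - 0) = 0 := by
      simp [bR]
    rw [h0, add_zero]
    refine Finset.sum_congr rfl fun b hb => ?_
    have hc1 : k - a - (b+1) = k - a - b - 1 := by omega
    rw [hc1, show b + 1 - 1 = b from rfl]
  rw [hP, hQ, ← Finset.sum_add_distrib]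
  refine Finset.sum_eq_zero fun a ha => ?_
  rw [← Finset.sum_add_distrib]
  refine Finset.sum_eq_zero fun b hb => ?_
  have ha' : a < k := Finset.mem_range.mp ha
  have hb' : b < k - a := Finset.mem_range.mp hb
  have habc : a + b + (k - a - b - 1) + 1 = k := by omega
  have hkey := key_id hnk a b (k - a - b - 1) habc
  calc ORA n k (a+1) b (k - a - b - 1) * gR n k (a+1) * T a b (k - a - b - 1)
        + ORA n k a (b+1) (k - a - b - 1) * bR n k (b+1) * T a b (k - a - b - 1)
      = (ORA n k (a+1) b (k - a - b - 1) * gR n k (a+1)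
          + ORA n k a (b+1) (k - a - b - 1) * bR n k (b+1)) * T a b (k - a - b - 1) := by
        ring
    _ = 0 := by rw [hkey, zero_mul]
end

section
/- Fix an integer n ≥ 1. Define additionally, for smooth functions u, h on an open subset of ℝ × ℝ^{n+1}: |∇̃u|² := −(∂_t u)² + Σ_{i=0}^n (∂_{x^i} u)² (the squared ambient gradient with respect to g̃ = −dt² + Σ(dx^i)²) and δ̃(h du) := ∂_t(h·∂_t u) − Σ_{i=0}^n ∂_{x^i}(h·∂_{x^i} u) (the divergence-type operator with the convention δ(du) = Δ̃u). Then for every smooth function u on an open subset of ℝ × ℝ^{n+1} one has, identically: −((n−2)/16)·u·Δ̃²(u²) + (n/96)·( Δ̃²(u³) + 3u²·Δ̃²u ) + ((n−4)/16)·( u·(Δ̃u)² + Δ̃(u²·Δ̃u) ) = −(1/2)·δ̃( |∇̃u|²·du ) + ((n−4)/16)·( u·Δ̃(|∇̃u|²) + δ̃( (Δ̃(u²))·du ) ). -/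
/-- The squared ambient gradient `|∇̃u|² = −(∂_t u)² + Σᵢ (∂_{xⁱ}u)²` with respect to
`g̃ = −dt² + Σᵢ (dxⁱ)²`. -/
noncomputable def gradSq {n : ℕ} (u : Amb n → ℝ) (p : Amb n) : ℝ :=
  -(ptD u p)^2 + ∑ i, (pxD i u p)^2

/-- The divergence-type operator `δ̃(h du) = ∂_t(h·∂_t u) − Σᵢ ∂_{xⁱ}(h·∂_{xⁱ}u)`
(convention `δ̃(du) = Δ̃u`). -/
noncomputable def divA {n : ℕ} (h u : Amb n → ℝ) (p : Amb n) : ℝ :=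
  ptD (fun q => h q * ptD u q) p - ∑ i, pxD i (fun q => h q * pxD i u q) p

namespace Stmt14

noncomputable def DD {n : ℕ} (v : Amb n) (f : Amb n → ℝ) (p : Amb n) : ℝ := fderiv ℝ f p v

noncomputable def Bf {n : ℕ} (f g : Amb n → ℝ) (p : Amb n) : ℝ :=
  -(ptD f p * ptD g p) + ∑ i, pxD i f p * pxD i g p

variable {n : ℕ} {U : Set (Amb n)} {f g h u : Amb n → ℝ} {p : Amb n}

lemma ptD_def (f : Amb n → ℝ) (p : Amb n) : ptD f p = DD (1,0) f p := rfl
lemma pxD_def (i : Fin (n+1)) (f : Amb n → ℝ) (p : Amb n) :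
    pxD i f p = DD (0, Pi.single i 1) f p := rfl

lemma diffAt (hU : IsOpen U) (hf : ContDiffOn ℝ (⊤:ℕ∞) f U) (hp : p ∈ U) :
    DifferentiableAt ℝ f p :=
  (hf.contDiffAt (hU.mem_nhds hp)).differentiableAt (by simp)

lemma smooth_DD (hU : IsOpen U) (hf : ContDiffOn ℝ (⊤:ℕ∞) f U) (v : Amb n) :
    ContDiffOn ℝ (⊤:ℕ∞) (DD v f) U :=
  (hf.fderiv_of_isOpen hU (by exact_mod_cast le_top)).clm_apply contDiffOn_const

lemma DD_congr (hU : IsOpen U) (hfg : ∀ q ∈ U, f q = g q) (hp : p ∈ U) (v : Amb n) :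
    DD v f p = DD v g p := by
  unfold DD
  rw [Filter.EventuallyEq.fderiv_eq (Filter.eventuallyEq_of_mem (hU.mem_nhds hp) hfg)]

lemma DD_mul (hf : DifferentiableAt ℝ f p) (hg : DifferentiableAt ℝ g p) (v : Amb n) :
    DD v (fun q => f q * g q) p = f p * DD v g p + g p * DD v f p := by
  unfold DD; rw [fderiv_fun_mul hf hg]; simp

lemma DD_combo (hf : DifferentiableAt ℝ f p) (hg : DifferentiableAt ℝ g p) (c d : ℝ) (v : Amb n) :
    DD v (fun q => c * f q + d * g q) p = c * DD v f p + d * DD v g p := by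
  unfold DD
  rw [fderiv_fun_add ((hf.const_mul c)) ((hg.const_mul d)), fderiv_const_mul hf c,
    fderiv_const_mul hg d]
  simp

lemma DD_add (hf : DifferentiableAt ℝ f p) (hg : DifferentiableAt ℝ g p) (v : Amb n) :
    DD v (fun q => f q + g q) p = DD v f p + DD v g p := by
  unfold DD; rw [fderiv_fun_add hf hg]; simp

end Stmt14

namespace Stmt14
variable {n : ℕ} {U : Set (Amb n)} {f g h u : Amb n → ℝ} {p : Amb n}

lemma DD2_mul (hU : IsOpen U) (hf : ContDiffOn ℝ (⊤:ℕ∞) f U) (hg : ContDiffOn ℝ (⊤:ℕ∞) g U)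
    (hp : p ∈ U) (v : Amb n) :
    DD v (DD v (fun q => f q * g q)) p
      = f p * DD v (DD v g) p + g p * DD v (DD v f) p + 2 * (DD v f p * DD v g p) := by
  have h1 : ∀ q ∈ U, DD v (fun s => f s * g s) q = f q * DD v g q + g q * DD v f q :=
    fun q hq => DD_mul (diffAt hU hf hq) (diffAt hU hg hq) v
  rw [DD_congr hU h1 hp v]
  have hf' := diffAt hU hf hp
  have hg' := diffAt hU hg hp
  have hDf := diffAt hU (smooth_DD hU hf v) hp
  have hDg := diffAt hU (smooth_DD hU hg v) hp
  rw [DD_add (f := fun q => f q * DD v g q) (g := fun q => g q * DD v f q) (hf'.mul hDg) (hg'.mul hDf), DD_mul hf' hDg, DD_mul hg' hDf]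
  ring

lemma DD2_combo (hU : IsOpen U) (hf : ContDiffOn ℝ (⊤:ℕ∞) f U) (hg : ContDiffOn ℝ (⊤:ℕ∞) g U)
    (hp : p ∈ U) (c d : ℝ) (v : Amb n) :
    DD v (DD v (fun q => c * f q + d * g q)) p
      = c * DD v (DD v f) p + d * DD v (DD v g) p := by
  have h1 : ∀ q ∈ U, DD v (fun s => c * f s + d * g s) q = c * DD v f q + d * DD v g q :=
    fun q hq => DD_combo (diffAt hU hf hq) (diffAt hU hg hq) c d v
  rw [DD_congr hU h1 hp v,
    DD_combo (diffAt hU (smooth_DD hU hf v) hp) (diffAt hU (smooth_DD hU hg v) hp) c d v]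

lemma smooth_Lap (hU : IsOpen U) (hf : ContDiffOn ℝ (⊤:ℕ∞) f U) :
    ContDiffOn ℝ (⊤:ℕ∞) (LapA f) U := by
  have h1 := smooth_DD hU (smooth_DD hU hf (1,0)) (1,0)
  have h2 : ∀ i : Fin (n+1), ContDiffOn ℝ (⊤:ℕ∞)
      (DD (0, Pi.single i 1) (DD (0, Pi.single i 1) f)) U :=
    fun i => smooth_DD hU (smooth_DD hU hf _) _
  exact h1.sub (ContDiffOn.sum fun i _ => h2 i)

lemma smooth_gradSq (hU : IsOpen U) (hu : ContDiffOn ℝ (⊤:ℕ∞) u U) :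
    ContDiffOn ℝ (⊤:ℕ∞) (gradSq u) U := by
  have h1 := (smooth_DD hU hu ((1:ℝ),(0 : Fin (n+1) → ℝ))).pow 2
  have h2 : ∀ i : Fin (n+1), ContDiffOn ℝ (⊤:ℕ∞)
      (fun q => (DD (0, Pi.single i 1) u q)^2) U := fun i => (smooth_DD hU hu _).pow 2
  exact h1.neg.add (ContDiffOn.sum fun i _ => h2 i)

lemma Lap_congr (hU : IsOpen U) (hfg : ∀ q ∈ U, f q = g q) (hp : p ∈ U) :
    LapA f p = LapA g p := by
  unfold LapA
  simp only [ptD_def, pxD_def]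
  have h1 : ∀ v : Amb n, ∀ q ∈ U, DD v f q = DD v g q := fun v q hq => DD_congr hU hfg hq v
  rw [DD_congr hU (h1 _) hp]
  exact congrArg _ (Finset.sum_congr rfl fun i _ => DD_congr hU (h1 _) hp _)

lemma Lap_mul (hU : IsOpen U) (hf : ContDiffOn ℝ (⊤:ℕ∞) f U) (hg : ContDiffOn ℝ (⊤:ℕ∞) g U)
    (hp : p ∈ U) :
    LapA (fun q => f q * g q) p = f p * LapA g p + g p * LapA f p - 2 * Bf f g p := by
  unfold LapA Bf
  simp only [ptD_def, pxD_def]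
  rw [DD2_mul hU hf hg hp (1,0),
    Finset.sum_congr rfl (fun i (_ : i ∈ Finset.univ) => DD2_mul hU hf hg hp (0, Pi.single i 1))]
  simp only [Finset.sum_add_distrib, ← Finset.mul_sum]
  ring

lemma Lap_combo (hU : IsOpen U) (hf : ContDiffOn ℝ (⊤:ℕ∞) f U) (hg : ContDiffOn ℝ (⊤:ℕ∞) g U)
    (hp : p ∈ U) (c d : ℝ) :
    LapA (fun q => c * f q + d * g q) p = c * LapA f p + d * LapA g p := by
  unfold LapA
  simp only [ptD_def, pxD_def]
  rw [DD2_combo hU hf hg hp c d (1,0),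
    Finset.sum_congr rfl (fun i (_ : i ∈ Finset.univ) => DD2_combo hU hf hg hp c d (0, Pi.single i 1))]
  simp only [Finset.sum_add_distrib, ← Finset.mul_sum]
  ring

end Stmt14

namespace Stmt14
variable {n : ℕ} {U : Set (Amb n)} {f g h u : Amb n → ℝ} {p : Amb n}

lemma divA_eq (hU : IsOpen U) (hh : ContDiffOn ℝ (⊤:ℕ∞) h U) (hu : ContDiffOn ℝ (⊤:ℕ∞) u U)
    (hp : p ∈ U) :
    divA h u p = h p * LapA u p - Bf h u p := by
  unfold divA LapA Bf
  simp only [ptD_def, pxD_def]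
  have key : ∀ v : Amb n, DD v (fun q => h q * DD v u q) p
      = h p * DD v (DD v u) p + DD v u p * DD v h p :=
    fun v => DD_mul (diffAt hU hh hp) (diffAt hU (smooth_DD hU hu v) hp) v
  rw [key (1,0),
    Finset.sum_congr rfl (fun i (_ : i ∈ Finset.univ) => key (0, Pi.single i 1))]
  simp only [Finset.sum_add_distrib, ← Finset.mul_sum]
  have e : ∑ i : Fin (n+1), DD (0, Pi.single i 1) u p * DD (0, Pi.single i 1) h p
      = ∑ i : Fin (n+1), DD (0, Pi.single i 1) h p * DD (0, Pi.single i 1) u p :=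
    Finset.sum_congr rfl fun i _ => mul_comm _ _
  rw [e]
  ring

lemma divA_congr (hU : IsOpen U) (hu : ContDiffOn ℝ (⊤:ℕ∞) u U)
    (hfg : ∀ q ∈ U, f q = g q) (hp : p ∈ U) :
    divA f u p = divA g u p := by
  unfold divA
  simp only [ptD_def, pxD_def]
  have key : ∀ v : Amb n, DD v (fun q => f q * DD v u q) p = DD v (fun q => g q * DD v u q) p :=
    fun v => DD_congr hU (fun q hq => by rw [hfg q hq]) hp v
  rw [key (1,0)]
  exact congrArg _ (Finset.sum_congr rfl fun i _ => key _)

lemma B_comm : Bf f g p = Bf g f p := by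
  unfold Bf
  rw [mul_comm]
  exact congrArg _ (Finset.sum_congr rfl fun i _ => mul_comm _ _)

lemma B_mul (hf : DifferentiableAt ℝ f p) (hg : DifferentiableAt ℝ g p) :
    Bf (fun q => f q * g q) h p = f p * Bf g h p + g p * Bf f h p := by
  unfold Bf
  simp only [ptD_def, pxD_def]
  rw [DD_mul hf hg (1,0),
    Finset.sum_congr rfl (fun i (_ : i ∈ Finset.univ) => by rw [DD_mul hf hg (0, Pi.single i 1)])]
  simp only [add_mul, Finset.sum_add_distrib, mul_assoc, ← Finset.mul_sum]
  ring

lemma B_combo (hf : DifferentiableAt ℝ f p) (hg : DifferentiableAt ℝ g p) (c d : ℝ) :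
    Bf (fun q => c * f q + d * g q) h p = c * Bf f h p + d * Bf g h p := by
  unfold Bf
  simp only [ptD_def, pxD_def]
  rw [DD_combo hf hg c d (1,0),
    Finset.sum_congr rfl (fun i (_ : i ∈ Finset.univ) => by rw [DD_combo hf hg c d (0, Pi.single i 1)])]
  simp only [add_mul, Finset.sum_add_distrib, mul_assoc, ← Finset.mul_sum]
  ring

lemma B_sq (hf : DifferentiableAt ℝ u p) :
    Bf (fun q => (u q)^2) h p = 2 * u p * Bf u h p := by
  have e : (fun q => (u q)^2) = (fun q => u q * u q) := by funext q; ring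
  rw [e, B_mul hf hf]; ring

lemma gradSq_eq_B : gradSq u p = Bf u u p := by
  simp only [gradSq, Bf, pow_two]

end Stmt14


open Stmt14

/-- the identity of Example 3.5, realizing the σ₂-operator ambiently:
for every smooth `u` on an open subset of `ℝ × ℝ^{n+1}`,
`−((n−2)/16)·u·Δ̃²(u²) + (n/96)·(Δ̃²(u³) + 3u²·Δ̃²u) + ((n−4)/16)·(u·(Δ̃u)² + Δ̃(u²·Δ̃u))
  = −(1/2)·δ̃(|∇̃u|²·du) + ((n−4)/16)·(u·Δ̃(|∇̃u|²) + δ̃((Δ̃(u²))·du))`. -/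
theorem stmt_14 (n : ℕ) (hn : 1 ≤ n)
    (U : Set (Amb n)) (hU : IsOpen U) (u : Amb n → ℝ)
    (hu : ContDiffOn ℝ (⊤ : ℕ∞) u U) (p : Amb n) (hp : p ∈ U) :
    -(((n:ℝ) - 2)/16) * u p * LapA^[2] (fun q => (u q)^2) p
      + ((n:ℝ)/96) * (LapA^[2] (fun q => (u q)^3) p + 3 * (u p)^2 * LapA^[2] u p)
      + (((n:ℝ) - 4)/16) * (u p * (LapA u p)^2 + LapA (fun q => (u q)^2 * LapA u q) p)
    = -(1/2) * divA (gradSq u) u p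
      + (((n:ℝ) - 4)/16) * (u p * LapA (gradSq u) p
          + divA (fun q => LapA (fun s => (u s)^2) q) u p) := by
  have hu2 : ContDiffOn ℝ (⊤:ℕ∞) (fun q => (u q)^2) U := hu.pow 2
  have hL := smooth_Lap hU hu
  have hG := smooth_gradSq hU hu
  have huL : ContDiffOn ℝ (⊤:ℕ∞) (fun q => u q * LapA u q) U := hu.mul hL
  have hu2L : ContDiffOn ℝ (⊤:ℕ∞) (fun q => (u q)^2 * LapA u q) U := hu2.mul hL
  have huG : ContDiffOn ℝ (⊤:ℕ∞) (fun q => u q * gradSq u q) U := hu.mul hG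
  have F1 : ∀ q ∈ U, LapA (fun s => (u s)^2) q
      = 2 * (u q * LapA u q) + (-2) * gradSq u q := by
    intro q hq
    have e : (fun s : Amb n => (u s)^2) = (fun s => u s * u s) := by funext s; ring
    rw [e, Lap_mul hU hu hu hq, ← gradSq_eq_B]; ring
  have F2 : ∀ q ∈ U, LapA (fun s => (u s)^3) q
      = 3 * ((u q)^2 * LapA u q) + (-6) * (u q * gradSq u q) := by
    intro q hq
    have e : (fun s : Amb n => (u s)^3) = (fun s => u s * (u s)^2) := by funext s; ring
    rw [e, Lap_mul hU hu hu2 hq, F1 q hq, B_comm, B_sq (diffAt hU hu hq), ← gradSq_eq_B]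
    ring
  have T1 : LapA^[2] (fun q => (u q)^2) p
      = 2*(u p * LapA (LapA u) p) + 2*(LapA u p * LapA u p)
        - 4*Bf u (LapA u) p - 2*LapA (gradSq u) p := by
    show LapA (LapA (fun q => (u q)^2)) p = _
    rw [Lap_congr hU F1 hp, Lap_combo hU huL hG hp 2 (-2), Lap_mul hU hu hL hp]
    ring
  have T2 : LapA^[2] (fun q => (u q)^3) p
      = 3*((u p)^2 * LapA (LapA u) p) + 6*(u p*(LapA u p*LapA u p))
        - 12*(gradSq u p*LapA u p) - 12*(u p*Bf u (LapA u) p)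
        - 6*(u p*LapA (gradSq u) p) + 12*Bf u (gradSq u) p := by
    show LapA (LapA (fun q => (u q)^3)) p = _
    rw [Lap_congr hU F2 hp, Lap_combo hU hu2L huG hp 3 (-6),
      Lap_mul hU hu2 hL hp, Lap_mul hU hu hG hp, F1 p hp, B_sq (diffAt hU hu hp)]
    ring
  have T3 : LapA^[2] u p = LapA (LapA u) p := rfl
  have T5 : LapA (fun q => (u q)^2 * LapA u q) p
      = (u p)^2 * LapA (LapA u) p + 2*(u p*(LapA u p*LapA u p))
        - 2*(gradSq u p*LapA u p) - 4*(u p*Bf u (LapA u) p) := by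
    rw [Lap_mul hU hu2 hL hp, F1 p hp, B_sq (diffAt hU hu hp)]
    ring
  have T6 : divA (gradSq u) u p = gradSq u p * LapA u p - Bf u (gradSq u) p := by
    rw [divA_eq hU hG hu hp, B_comm]
  have T8 : divA (fun q => LapA (fun s => (u s)^2) q) u p
      = 2*(u p*(LapA u p*LapA u p)) - 4*(gradSq u p*LapA u p)
        - 2*(u p*Bf u (LapA u) p) + 2*Bf u (gradSq u) p := by
    rw [divA_congr hU hu F1 hp,
      divA_eq hU ((contDiffOn_const.mul huL).add (contDiffOn_const.mul hG)) hu hp,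
      B_combo (diffAt hU huL hp) (diffAt hU hG hp) 2 (-2),
      B_mul (diffAt hU hu hp) (diffAt hU hL hp),
      B_comm (f := LapA u) (g := u), B_comm (f := gradSq u) (g := u), ← gradSq_eq_B]
    ring
  rw [T1, T2, T3, T5, T6, T8]
  ring
end
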